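/- Let E be a Hausdorff locally convex topological vector space over ℝ, let G be a Hausdorff topological group, and let exp : E → G be a continuous map such that exp(k • a) = (exp a)^k for all a ∈ E and all k ∈ ℤ, and such that exp restricts to a homeomorphism from some open neighborhood of 0 in E onto an open neighborhood of the identity in G. Then G is uniformly NSS if and only if E is normable, i.e., there exists a norm on E whose induced metric topology equals the topology of E. -/

import Mathlib

open Filter Set Topology Pointwise

/-- The neighborhood `U` of the identity is uniformly free from small subgroups: for every
neighborhood `V` of the identity there is `n` such that every `x ∉ V` has `x ^ k ∉ U` for some
`1 ≤ k ≤ n`. -/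
def UniformlyFreeFSS {G : Type*} [Group G] [TopologicalSpace G] (U : Set G) : Prop :=
  ∀ V ∈ 𝓝 (1 : G), ∃ n : ℕ, ∀ x : G, x ∉ V → ∃ k : ℕ, 1 ≤ k ∧ k ≤ n ∧ x ^ k ∉ U

/-- A topological group is uniformly NSS if some neighborhood of the identity is uniformly free
from small subgroups. -/
def UNSS (G : Type*) [Group G] [TopologicalSpace G] : Prop :=
  ∃ U ∈ 𝓝 (1 : G), UniformlyFreeFSS U

/-- Kolmogorov-style normability criterion: if a locally convex Hausdorff space has a
"uniformly NSS" neighborhood of zero (additively), then it is normable. -/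
theorem norm_of_add_unss {E : Type*} [AddCommGroup E] [Module ℝ E] [TopologicalSpace E]
    [IsTopologicalAddGroup E] [ContinuousSMul ℝ E] [LocallyConvexSpace ℝ E] [T2Space E]
    (U₀ : Set E) (hU₀ : U₀ ∈ 𝓝 (0 : E))
    (hprop : ∀ W ∈ 𝓝 (0 : E), ∃ n : ℕ, ∀ a : E, a ∉ W →
      ∃ k : ℕ, 1 ≤ k ∧ k ≤ n ∧ (k : ℝ) • a ∉ U₀) :
    ∃ N : E → ℝ,
      (∀ x, N x = 0 ↔ x = 0) ∧
      (∀ x y, N (x + y) ≤ N x + N y) ∧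
      (∀ (c : ℝ) (x : E), N (c • x) = |c| * N x) ∧
      (∀ s : Set E, IsOpen s ↔ ∀ x ∈ s, ∃ ε > (0 : ℝ), {y : E | N (y - x) < ε} ⊆ s) := by
  obtain ⟨U, ⟨hU0, hUopen, hUbal, hUconv⟩, hUsub⟩ :=
    (nhds_hasBasis_absConvex_open ℝ E).mem_iff.1 hU₀
  have hUabs : Absorbent ℝ U := absorbent_nhds_zero (hUopen.mem_nhds hU0)
  -- `U` is von Neumann bounded
  have hbdd : Bornology.IsVonNBounded ℝ U := by
    intro W hW
    set W' := balancedCore ℝ W with hW'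
    have hW'bal : Balanced ℝ W' := balancedCore_balanced W
    obtain ⟨n, hn⟩ := hprop W' (balancedCore_mem_nhds_zero hW)
    have hnpos : (0 : ℝ) < (n : ℝ) + 1 := by positivity
    have hsub : U ⊆ ((n : ℝ) + 1) • W' := by
      intro u hu
      have hmem : ((n : ℝ) + 1)⁻¹ • u ∈ W' := by
        by_contra hmem
        obtain ⟨k, hk1, hkn, hkU⟩ := hn _ hmem
        apply hkU
        apply hUsub
        rw [smul_smul]
        refine hUbal.smul_mem ?_ hu
        rw [Real.norm_eq_abs, abs_of_nonneg (by positivity), ← div_eq_mul_inv,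
          div_le_one hnpos]
        have : (k : ℝ) ≤ (n : ℝ) := Nat.cast_le.2 hkn
        linarith
      exact ⟨_, hmem, by
        show ((n : ℝ) + 1) • ((n : ℝ) + 1)⁻¹ • u = u
        rw [smul_smul, mul_inv_cancel₀ hnpos.ne', one_smul]⟩
    refine Absorbs.of_norm ⟨(n : ℝ) + 1, fun c hc => ?_⟩
    refine hsub.trans ((hW'bal.smul_mono ?_).trans (smul_set_mono (balancedCore_subset W)))
    rwa [Real.norm_eq_abs, abs_of_pos hnpos]
  -- the gauge of `U` is the desired norm
  have hgsmul : ∀ (c : ℝ) (x : E), gauge U (c • x) = |c| * gauge U x := by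
    intro c x
    rw [gauge_smul hUbal, Real.norm_eq_abs]
  have hlt_one : {x : E | gauge U x < 1} = U :=
    gauge_lt_one_eq_self_of_isOpen hUconv hU0 hUopen
  have hball : ∀ ε : ℝ, 0 < ε → {y : E | gauge U y < ε} = ε • U := by
    intro ε hε
    ext y
    rw [mem_smul_set_iff_inv_smul_mem₀ hε.ne', mem_setOf_eq,
      ← Set.ext_iff.1 hlt_one (ε⁻¹ • y), mem_setOf_eq, hgsmul,
      abs_of_pos (inv_pos.2 hε), inv_mul_lt_iff₀ hε, mul_one]
  refine ⟨gauge U, fun x => gauge_eq_zero hUabs hbdd, gauge_add_le hUconv hUabs,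
    hgsmul, fun s => ⟨fun hs x hx => ?_, fun h => ?_⟩⟩
  · -- open sets contain gauge balls
    have ht : (fun y : E => y + x) ⁻¹' s ∈ 𝓝 (0 : E) := by
      refine (continuous_id.add continuous_const).continuousAt.preimage_mem_nhds ?_
      simpa using hs.mem_nhds hx
    obtain ⟨r, hr⟩ := absorbs_iff_norm.1 (hbdd ht)
    set c := max r 1 with hc
    have hcpos : (0 : ℝ) < c := lt_of_lt_of_le one_pos (le_max_right _ _)
    have hsubc : U ⊆ c • ((fun y : E => y + x) ⁻¹' s) := by
      refine hr c ?_
      rw [Real.norm_eq_abs, abs_of_pos hcpos]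
      exact le_max_left _ _
    refine ⟨c⁻¹, inv_pos.2 hcpos, fun y hy => ?_⟩
    have hy' : y - x ∈ c⁻¹ • U := by rw [← hball _ (inv_pos.2 hcpos)]; exact hy
    obtain ⟨u, hu, huy⟩ := hy'
    obtain ⟨w, hw, hwu⟩ := hsubc hu
    change c⁻¹ • u = y - x at huy
    change c • w = u at hwu
    have hyx : y - x = w := by
      rw [← huy, ← hwu, smul_smul, inv_mul_cancel₀ hcpos.ne', one_smul]
    have : w + x ∈ s := hw
    rwa [← hyx, sub_add_cancel] at this
  · -- sets containing gauge balls around each point are open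
    rw [isOpen_iff_mem_nhds]
    intro x hx
    obtain ⟨ε, hε, hsub⟩ := h x hx
    refine mem_of_superset ?_ hsub
    have hUε : IsOpen (ε • U) := hUopen.smul₀ hε.ne'
    have heq : {y : E | gauge U (y - x) < ε} = (fun y : E => y - x) ⁻¹' (ε • U) := by
      ext y
      rw [mem_preimage, ← hball ε hε, mem_setOf_eq, mem_setOf_eq]
    rw [heq]
    refine (continuous_id.sub continuous_const).continuousAt.preimage_mem_nhds ?_
    have : (0 : E) ∈ ε • U := ⟨0, hU0, smul_zero ε⟩
    simpa using hUε.mem_nhds this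

theorem stmt_13 {E G : Type*}
    [AddCommGroup E] [Module ℝ E] [TopologicalSpace E] [IsTopologicalAddGroup E]
    [ContinuousSMul ℝ E] [LocallyConvexSpace ℝ E] [T2Space E]
    [Group G] [TopologicalSpace G] [IsTopologicalGroup G] [T2Space G]
    (exp : E → G) (hexpc : Continuous exp)
    (hexppow : ∀ (a : E) (k : ℤ), exp (k • a) = exp a ^ k)
    (V : Set E) (hVo : IsOpen V) (hV0 : (0 : E) ∈ V)
    (hVimage : IsOpen (exp '' V)) (hinj : Set.InjOn exp V)
    (ψ : G → E) (hψ : ∀ x ∈ V, ψ (exp x) = x) (hψc : ContinuousOn ψ (exp '' V)) :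
    UNSS G ↔
      ∃ N : E → ℝ,
        (∀ x, N x = 0 ↔ x = 0) ∧
        (∀ x y, N (x + y) ≤ N x + N y) ∧
        (∀ (c : ℝ) (x : E), N (c • x) = |c| * N x) ∧
        (∀ s : Set E, IsOpen s ↔ ∀ x ∈ s, ∃ ε > (0 : ℝ), {y : E | N (y - x) < ε} ⊆ s) := by
  have exp0 : exp 0 = 1 := by simpa using hexppow 0 0
  have hnatpow : ∀ (a : E) (k : ℕ), exp ((k : ℝ) • a) = exp a ^ k := by
    intro a k
    have : ((k : ℕ) : ℝ) • a = ((k : ℕ) : ℤ) • a := by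
      rw [← Int.cast_smul_eq_zsmul ℝ]; norm_num
    rw [this, hexppow, zpow_natCast]
  have hopen : ∀ W : Set E, IsOpen W → W ⊆ V → IsOpen (exp '' W) := by
    intro W hWo hWV
    have : exp '' W = exp '' V ∩ ψ ⁻¹' W := by
      ext x
      constructor
      · rintro ⟨w, hw, rfl⟩
        exact ⟨⟨w, hWV hw, rfl⟩, by rw [mem_preimage, hψ w (hWV hw)]; exact hw⟩
      · rintro ⟨⟨v, hv, rfl⟩, hx⟩
        rw [mem_preimage, hψ v hv] at hx
        exact ⟨v, hx, rfl⟩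
    rw [this]
    exact hψc.isOpen_inter_preimage hVimage hWo
  constructor
  · -- UNSS G → normable
    rintro ⟨U_G, hUG, hFSS⟩
    apply norm_of_add_unss (V ∩ exp ⁻¹' U_G)
    · exact Filter.inter_mem (hVo.mem_nhds hV0)
        (hexpc.continuousAt.preimage_mem_nhds (by rwa [exp0]))
    · intro W hW
      obtain ⟨O, hOsub, hOopen, hO0⟩ := mem_nhds_iff.1 hW
      have hW'o : IsOpen (O ∩ V) := hOopen.inter hVo
      have h1W : exp '' (O ∩ V) ∈ 𝓝 (1 : G) :=
        (hopen _ hW'o inter_subset_right).mem_nhds ⟨0, ⟨hO0, hV0⟩, exp0⟩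
      obtain ⟨n, hn⟩ := hFSS _ h1W
      refine ⟨n + 1, fun a ha => ?_⟩
      by_cases haV : a ∈ V
      · have hnotim : exp a ∉ exp '' (O ∩ V) := by
          rintro ⟨b, hb, hba⟩
          exact ha (hOsub ((hinj hb.2 haV hba ▸ hb).1))
        obtain ⟨k, hk1, hkn, hkU⟩ := hn _ hnotim
        refine ⟨k, hk1, hkn.trans (Nat.le_succ n), fun hmem => hkU ?_⟩
        have := hmem.2
        rwa [mem_preimage, hnatpow] at this
      · exact ⟨1, le_rfl, Nat.le_add_left 1 n, fun hmem => haV (by simpa using hmem.1)⟩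
  · -- normable → UNSS G
    rintro ⟨N, hN0, hNadd, hNsmul, hNopen⟩
    have hN00 : N 0 = 0 := (hN0 0).2 rfl
    have hNneg : ∀ x, N (-x) = N x := fun x => by simpa using hNsmul (-1) x
    have hNnn : ∀ x, 0 ≤ N x := by
      intro x
      have h := hNadd x (-x)
      rw [add_neg_cancel, hN00, hNneg] at h
      linarith
    have hball_open : ∀ (x : E) (ε : ℝ), IsOpen {y : E | N (y - x) < ε} := by
      intro x ε
      rw [hNopen]
      intro y hy
      rw [mem_setOf_eq] at hy
      refine ⟨ε - N (y - x), by linarith, fun z hz => ?_⟩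
      rw [mem_setOf_eq] at hz ⊢
      have h := hNadd (z - y) (y - x)
      rw [sub_add_sub_cancel] at h
      linarith
    obtain ⟨ε₀, hε₀, hVb⟩ := (hNopen V).1 hVo 0 hV0
    have Vball : ∀ y : E, N y < ε₀ → y ∈ V := fun y hy => hVb (by simpa using hy)
    have hBopen : IsOpen {y : E | N y < ε₀ / 2} := by
      simpa [sub_zero] using hball_open 0 (ε₀ / 2)
    have hBV : {y : E | N y < ε₀ / 2} ⊆ V := fun y hy => Vball y (by
      rw [mem_setOf_eq] at hy; linarith)
    refine ⟨exp '' {y : E | N y < ε₀ / 2},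
      (hopen _ hBopen hBV).mem_nhds ⟨0, by simpa [hN00] using half_pos hε₀, exp0⟩, ?_⟩
    intro W hW
    obtain ⟨O, hOsub, hOopen, hO1⟩ := mem_nhds_iff.1 hW
    have hpre : exp ⁻¹' O ∈ 𝓝 (0 : E) :=
      hexpc.continuousAt.preimage_mem_nhds (by rw [exp0]; exact hOopen.mem_nhds hO1)
    obtain ⟨O', hO'sub, hO'open, hO'0⟩ := mem_nhds_iff.1 hpre
    obtain ⟨δ', hδ', hδ'sub⟩ := (hNopen O').1 hO'open 0 hO'0
    set δ := min δ' (ε₀ / 2) with hδdef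
    have hδpos : 0 < δ := lt_min hδ' (half_pos hε₀)
    have hδle : δ ≤ ε₀ / 2 := min_le_right _ _
    set n := ⌈ε₀ / δ⌉₊ with hn
    have hn1 : 1 ≤ n := Nat.one_le_ceil_iff.2 (div_pos hε₀ hδpos)
    refine ⟨n, fun x hx => ?_⟩
    by_contra hcon
    push_neg at hcon
    have hx1 : x ∈ exp '' {y : E | N y < ε₀ / 2} := by
      simpa using hcon 1 le_rfl hn1
    obtain ⟨a, haN, hax⟩ := hx1
    rw [mem_setOf_eq] at haN
    have haV : a ∈ V := hBV haN
    by_cases hsmall : N a < δ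
    · refine hx (hOsub ?_)
      have haO' : a ∈ O' := hδ'sub (by
        simp only [mem_setOf_eq, sub_zero]
        exact lt_of_lt_of_le hsmall (min_le_left _ _))
      have := hO'sub haO'
      rwa [mem_preimage, hax] at this
    · push_neg at hsmall
      have hNa : 0 < N a := lt_of_lt_of_le hδpos hsmall
      set k := ⌈(ε₀ / 2) / N a⌉₊ with hk
      have hk1 : 1 ≤ k := Nat.one_le_ceil_iff.2 (div_pos (half_pos hε₀) hNa)
      have hkn : k ≤ n := by
        refine Nat.ceil_le_ceil ?_
        calc (ε₀ / 2) / N a ≤ (ε₀ / 2) / δ := by gcongr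
          _ ≤ ε₀ / δ := by gcongr; linarith
      have hclt : ((k : ℕ) : ℝ) < (ε₀ / 2) / N a + 1 :=
        Nat.ceil_lt_add_one (le_of_lt (div_pos (half_pos hε₀) hNa))
      have hcancel : ((ε₀ / 2) / N a) * N a = ε₀ / 2 := div_mul_cancel₀ _ hNa.ne'
      have hklt : (k : ℝ) * N a < ε₀ := by
        nlinarith [mul_lt_mul_of_pos_right hclt hNa]
      have hkge : ε₀ / 2 ≤ (k : ℝ) * N a := by
        have hle := Nat.le_ceil ((ε₀ / 2) / N a)
        calc ε₀ / 2 = ((ε₀ / 2) / N a) * N a := hcancel.symm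
          _ ≤ (k : ℝ) * N a := mul_le_mul_of_nonneg_right hle hNa.le
      have hxk : x ^ k ∈ exp '' {y : E | N y < ε₀ / 2} := hcon k hk1 hkn
      obtain ⟨b, hbN, hbx⟩ := hxk
      rw [mem_setOf_eq] at hbN
      have hNka : N ((k : ℝ) • a) = (k : ℝ) * N a := by
        rw [hNsmul, abs_of_nonneg (Nat.cast_nonneg k)]
      have hkaV : (k : ℝ) • a ∈ V := Vball _ (by rw [hNka]; exact hklt)
      have hab : (k : ℝ) • a = b := hinj hkaV (hBV hbN) (by rw [hnatpow, hax, hbx])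
      rw [hab] at hNka
      linarith
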